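/- arXiv:1806.02668 — 5 statements merged into one kernel-verified Lean document; each statement's English description precedes it below -/
import Mathlib

section
/- Let k be a perfect field of characteristic 2 and R = k[[s,t]] the ring of formal power series in two variables s, t, with maximal ideal m. Let c_xx, c_yy, c_zz, c_xy, c_xz, c_yz ∈ R be such that the constant terms of c_xy, c_xz and c_yz are all zero, and set δ := c_xy·c_yz·c_xz + c_xz²·c_yy + c_yz²·c_xx + c_xy²·c_zz ∈ R. Then there do not exist a unit U ∈ R and elements f₁, f₂ ∈ m whose degree-one homogeneous parts are k-linearly independent, such that δ = U·f₁·f₂. (In other words, in characteristic 2 the discriminant of a conic bundle can never consist, formally locally around a point over which the fibre is a double line, of two smooth branches meeting transversely at that point.) -/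
open MvPowerSeries

section Aux

open Finsupp

variable {k : Type*} [CommRing k]

lemma coeff1_mul (φ ψ : MvPowerSeries (Fin 2) k) (i : Fin 2) :
    coeff (single i 1) (φ * ψ) =
      coeff (single i 1) φ * constantCoeff ψ +
      constantCoeff φ * coeff (single i 1) ψ := by
  classical
  rw [coeff_mul, Finsupp.antidiagonal_single, Finset.sum_map,
    show (Finset.HasAntidiagonal.antidiagonal 1 : Finset (ℕ × ℕ)) = {(0,1),(1,0)} from rfl,
    Finset.sum_insert (by decide), Finset.sum_singleton]
  simp [coeff_zero_eq_constantCoeff, add_comm]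

lemma antidiagonal_st :
    Finset.HasAntidiagonal.antidiagonal (single (0:Fin 2) 1 + single 1 1) =
      {(0, single 0 1 + single 1 1), (single 0 1, single 1 1),
       (single 1 1, single 0 1), (single 0 1 + single 1 1, 0)} := by
  ext ⟨e, f⟩
  simp only [Finset.HasAntidiagonal.mem_antidiagonal, Finset.mem_insert, Finset.mem_singleton, Prod.ext_iff,
    DFunLike.ext_iff, Fin.forall_fin_two, Finsupp.add_apply, Finsupp.single_apply,
    Finsupp.coe_zero, Pi.zero_apply]
  norm_num
  omega

lemma coeff_st_mul (φ ψ : MvPowerSeries (Fin 2) k)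
    (hφ : constantCoeff φ = 0) (hψ : constantCoeff ψ = 0) :
    coeff (single 0 1 + single 1 1) (φ * ψ) =
      coeff (single 0 1) φ * coeff (single 1 1) ψ +
      coeff (single 1 1) φ * coeff (single 0 1) ψ := by
  classical
  rw [coeff_mul, antidiagonal_st]
  rw [Finset.sum_insert (by simp [Prod.ext_iff, DFunLike.ext_iff, Fin.forall_fin_two,
        Finsupp.single_apply]),
    Finset.sum_insert (by simp [Prod.ext_iff, DFunLike.ext_iff, Fin.forall_fin_two,
        Finsupp.single_apply]),
    Finset.sum_insert (by simp [Prod.ext_iff, DFunLike.ext_iff, Fin.forall_fin_two,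
        Finsupp.single_apply]),
    Finset.sum_singleton]
  simp [coeff_zero_eq_constantCoeff, hφ, hψ]

end Aux

/-- In characteristic 2, the discriminant
`δ = c_xy c_yz c_xz + c_xz² c_yy + c_yz² c_xx + c_xy² c_zz` of a ternary quadratic form
over `k[[s,t]]` whose mixed coefficients have vanishing constant term (i.e. the central
fibre is a double line) cannot be a unit times a product of two elements of the maximal
ideal with linearly independent linear parts. -/
theorem discriminant_no_two_transverse_branches
    (k : Type*) [Field k] [PerfectField k] [CharP k 2]
    (cxx cyy czz cxy cxz cyz : MvPowerSeries (Fin 2) k)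
    (hxy : constantCoeff cxy = 0)
    (hxz : constantCoeff cxz = 0)
    (hyz : constantCoeff cyz = 0)
    (δ : MvPowerSeries (Fin 2) k)
    (hδ : δ = cxy * cyz * cxz + cxz ^ 2 * cyy + cyz ^ 2 * cxx + cxy ^ 2 * czz) :
    ¬ ∃ (U f₁ f₂ : MvPowerSeries (Fin 2) k),
        IsUnit U ∧
        constantCoeff f₁ = 0 ∧
        constantCoeff f₂ = 0 ∧
        LinearIndependent k
          ![fun i : Fin 2 => coeff (Finsupp.single i 1) f₁,
            fun i : Fin 2 => coeff (Finsupp.single i 1) f₂] ∧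
        δ = U * f₁ * f₂ := by
  rintro ⟨U, f₁, f₂, hU, hf₁, hf₂, hLI, hfac⟩
  classical
  set d : Fin 2 →₀ ℕ := Finsupp.single 0 1 + Finsupp.single 1 1 with hd
  -- abbreviations
  set u : k := constantCoeff U with hu
  set a : Fin 2 → k := fun i => coeff (Finsupp.single i 1) f₁ with ha
  set b : Fin 2 → k := fun i => coeff (Finsupp.single i 1) f₂ with hb
  have hu0 : u ≠ 0 := (isUnit_constantCoeff U hU).ne_zero
  -- the coefficient of `st` in δ is zero
  have key : coeff d δ = 0 := by
    have sq : ∀ φ ψ : MvPowerSeries (Fin 2) k, constantCoeff φ = 0 →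
        coeff d (φ ^ 2 * ψ) = 0 := by
      intro φ ψ hφ
      have h1 : φ ^ 2 * ψ = φ * (φ * ψ) := by ring
      have h2 : constantCoeff (φ * ψ) = 0 := by
        rw [map_mul, hφ, zero_mul]
      rw [h1, coeff_st_mul _ _ hφ h2, coeff1_mul, coeff1_mul, hφ]
      ring_nf
      rw [CharTwo.two_eq_zero (R := k)]
      ring
    have tri : coeff d (cxy * cyz * cxz) = 0 := by
      have h2 : constantCoeff (cxy * cyz) = 0 := by
        rw [map_mul, hxy, zero_mul]
      rw [coeff_st_mul _ _ h2 hxz, coeff1_mul, coeff1_mul, hxy, hyz]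
      ring
    rw [hδ, map_add, map_add, map_add, tri, sq _ _ hxz, sq _ _ hyz, sq _ _ hxy]
    ring
  -- the coefficient of `st` in U f₁ f₂
  have key2 : coeff d δ = u * (a 0 * b 1 + a 1 * b 0) := by
    have h1 : constantCoeff (U * f₁) = 0 := by
      rw [map_mul, hf₁, mul_zero]
    rw [hfac, coeff_st_mul _ _ h1 hf₂, coeff1_mul, coeff1_mul, hf₁]
    simp only [mul_zero, add_zero, ← hu, ← ha, ← hb]
    ring
  have hdet : a 0 * b 1 + a 1 * b 0 = 0 := by
    rcases mul_eq_zero.mp (key2.symm.trans key) with h | h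
    · exact absurd h hu0
    · exact h
  have hdet' : a 0 * b 1 = a 1 * b 0 := by
    linear_combination hdet + CharTwo.neg_eq (R := k) (a 1 * b 0)
  -- derive linear dependence
  rw [linearIndependent_fin2] at hLI
  obtain ⟨hw, hv⟩ := hLI
  simp only [Matrix.cons_val_one, Matrix.head_cons, Matrix.cons_val_zero] at hw hv
  by_cases hb0 : b 0 = 0
  · have hb1 : b 1 ≠ 0 := by
      intro hb1
      apply hw
      funext i
      fin_cases i <;> simp [hb0, hb1, ← hb]
    have ha0 : a 0 = 0 := by
      have : a 0 * b 1 = 0 := by rw [hdet', hb0, mul_zero]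
      rcases mul_eq_zero.mp this with h | h
      · exact h
      · exact absurd h hb1
    apply hv (a 1 / b 1)
    funext i
    fin_cases i <;>
      simp only [Pi.smul_apply, smul_eq_mul, ← ha, ← hb, Fin.zero_eta, Fin.mk_one] <;>
      simp [hb0, ha0, hb1]
  · apply hv (a 0 / b 0)
    funext i
    fin_cases i <;> simp only [Pi.smul_apply, smul_eq_mul, ← ha, ← hb, Fin.zero_eta, Fin.mk_one]
    · field_simp
    · field_simp
      linear_combination hdet'
end

section
/- The image of D in 𝔽₂[u,v,w] equals u·w·(u+w)·(u·(v²+uv+vw+w²) + v³). (That is, modulo 2 the discriminant of the conic bundle X factors as the three lines u = 0, w = 0, u+w = 0 together with the cubic u·(v²+uv+vw+w²) + v³ = 0.) -/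
open MvPolynomial

/-- The symmetric matrix `S` over `ℤ[u,v,w]` (with `u = X 0`, `v = X 1`, `w = X 2`)
defining the conic bundle `X ⊂ ℙ² × ℙ²`. -/
noncomputable def Smat : Matrix (Fin 3) (Fin 3) (MvPolynomial (Fin 3) ℤ) :=
  !![2*(X 0)*(X 1) + 4*(X 1)^2 + 2*(X 0)*(X 2) + 2*(X 2)^2,
       (X 0)^2 + (X 0)*(X 2) + (X 2)^2,
       (X 0)*(X 1);
     (X 0)^2 + (X 0)*(X 2) + (X 2)^2,
       2*(X 0)^2 + 2*(X 1)*(X 2) + 2*(X 2)^2,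
       (X 0)^2 + (X 1)*(X 2) + (X 2)^2;
     (X 0)*(X 1),
       (X 0)^2 + (X 1)*(X 2) + (X 2)^2,
       2*(X 1)^2 + 2*(X 0)*(X 2) + 2*(X 2)^2]

/-- The "even part": `D = u·w·(u+w)·(u·(v²+uv+vw+w²)+v³) + 2·Qpoly`. -/
noncomputable def Qpoly : MvPolynomial (Fin 3) ℤ :=
  (-1)*(X 0)^5*(X 2) + (-2)*(X 0)^4*(X 1)^2 + (2)*(X 0)^4*(X 1)*(X 2) +
  (2)*(X 0)^3*(X 1)^3 + (4)*(X 0)^3*(X 1)^2*(X 2) + (4)*(X 0)^2*(X 1)^4 +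
  (-3)*(X 0)^2*(X 1)^3*(X 2) + (4)*(X 0)^2*(X 1)^2*(X 2)^2 + (3)*(X 0)^2*(X 1)*(X 2)^3 +
  (2)*(X 0)*(X 1)^4*(X 2) + (7)*(X 0)*(X 1)^3*(X 2)^2 + (6)*(X 0)*(X 1)^2*(X 2)^3 +
  (5)*(X 0)*(X 1)*(X 2)^4 + (2)*(X 0)*(X 2)^5 + (4)*(X 1)^5*(X 2) + (3)*(X 1)^4*(X 2)^2 +
  (4)*(X 1)^3*(X 2)^3 + (4)*(X 1)^2*(X 2)^4 + (1)*(X 1)*(X 2)^5 + (1)*(X 2)^6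

noncomputable def Ppoly : MvPolynomial (Fin 3) ℤ :=
  X 0 * X 2 * (X 0 + X 2) *
    (X 0 * ((X 1)^2 + (X 0)*(X 1) + (X 1)*(X 2) + (X 2)^2) + (X 1)^3) + 2 * Qpoly

set_option maxHeartbeats 1000000 in
/-- Modulo 2, the discriminant `D` (where `2·D = det S`) factors as
`u·w·(u+w)·(u·(v²+uv+vw+w²) + v³)` in `𝔽₂[u,v,w]` (here `u = X 0`, `v = X 1`, `w = X 2`). -/
theorem discriminant_mod_two_factorization
    (D : MvPolynomial (Fin 3) ℤ) (hD : 2 * D = Smat.det) :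
    MvPolynomial.map (Int.castRingHom (ZMod 2)) D =
      X 0 * X 2 * (X 0 + X 2) *
        (X 0 * ((X 1)^2 + (X 0)*(X 1) + (X 1)*(X 2) + (X 2)^2) + (X 1)^3) := by
  have h2P : 2 * Ppoly = Smat.det := by
    simp [Smat, Matrix.det_fin_three]
    rw [Ppoly, Qpoly]
    ring
  have hDP : D = Ppoly := mul_left_cancel₀ two_ne_zero (hD.trans h2P.symm)
  have h2 : (2 : MvPolynomial (Fin 3) (ZMod 2)) = 0 := by
    rw [← map_ofNat (C : ZMod 2 →+* MvPolynomial (Fin 3) (ZMod 2)) 2,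
      show (2 : ZMod 2) = 0 from rfl, map_zero]
  rw [hDP, Ppoly]
  simp only [map_add, map_mul, map_pow, map_X, map_ofNat]
  rw [h2, zero_mul, add_zero]
end

section
/- Let K be an algebraic closure of 𝔽₂ and let c = u·(v²+uv+vw+w²) + v³, viewed in K[u,v,w]. Then the plane projective cubic c = 0 is smooth: there is no (u₀,v₀,w₀) ∈ K³ ∖ {0} at which c, ∂c/∂u, ∂c/∂v and ∂c/∂w all vanish. (Hence c = 0 defines a smooth elliptic curve E in the projective plane over the algebraic closure of 𝔽₂.) -/
open MvPolynomial

/-- The plane projective cubic `c = u·(v²+uv+vw+w²) + v³ = 0` is smooth over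
an algebraic closure `K` of `𝔽₂`: there is no nonzero point of `K³` at which `c` and all
three formal partial derivatives of `c` vanish.  (Here `u = X 0`, `v = X 1`, `w = X 2`.) -/
theorem cubic_is_smooth
    (K : Type*) [Field K] [IsAlgClosed K] [Algebra (ZMod 2) K]
    [Algebra.IsAlgebraic (ZMod 2) K]
    (c : MvPolynomial (Fin 3) K)
    (hc : c = X 0 * ((X 1)^2 + (X 0)*(X 1) + (X 1)*(X 2) + (X 2)^2) + (X 1)^3) :
    ¬ ∃ P : Fin 3 → K, P ≠ 0 ∧
        eval P c = 0 ∧ (∀ i : Fin 3, eval P (pderiv i c) = 0) := by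
  have h2 : (2 : K) = 0 := by
    rw [← map_ofNat (algebraMap (ZMod 2) K) 2]
    simp [show (2:ZMod 2) = 0 from rfl]
  have h3 : (3 : K) = 1 := by
    rw [show (3:K) = 2 + 1 by norm_num, h2]; ring
  rintro ⟨P, hP, h0, hd⟩
  have hd0 := hd 0
  have hd1 := hd 1
  have hd2 := hd 2
  simp [hc, Pi.single_apply] at hd0 hd1 hd2
  ring_nf at hd0 hd1 hd2
  rw [h2] at hd0 hd1 hd2
  ring_nf at hd0 hd1 hd2
  rw [h3] at hd1
  ring_nf at hd1
  -- hd0 : P 1 * P 2 + P 1 ^ 2 + P 2 ^ 2 = 0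
  -- hd1 : P 0 * P 2 + P 0 ^ 2 + P 1 ^ 2 = 0
  -- hd2 : P 0 = 0 ∨ P 1 = 0
  apply hP
  have key : P 0 = 0 ∧ P 1 = 0 ∧ P 2 = 0 := by
    rcases hd2 with h | h
    · have h1 : P 1 = 0 := by
        have : P 1 ^ 2 = 0 := by rw [h] at hd1; linear_combination hd1
        exact pow_eq_zero_iff (n := 2) (by norm_num) |>.mp this
      have hw : P 2 = 0 := by
        have : P 2 ^ 2 = 0 := by rw [h1] at hd0; linear_combination hd0
        exact pow_eq_zero_iff (n := 2) (by norm_num) |>.mp this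
      exact ⟨h, h1, hw⟩
    · have hw : P 2 = 0 := by
        have : P 2 ^ 2 = 0 := by rw [h] at hd0; linear_combination hd0
        exact pow_eq_zero_iff (n := 2) (by norm_num) |>.mp this
      have hu : P 0 = 0 := by
        have : P 0 ^ 2 = 0 := by rw [h, hw] at hd1; linear_combination hd1
        exact pow_eq_zero_iff (n := 2) (by norm_num) |>.mp this
      exact ⟨hu, h, hw⟩
  funext i
  fin_cases i
  · exact key.1
  · exact key.2.1
  · exact key.2.2
end

section
/- Let k be a field of characteristic 2 and a, b, c ∈ k not all zero. Set Q(x,y,z) = a·x² + a·xz + b·y² + b·yz + c·z². Then there exists (x,y,z) ∈ k³ ∖ {0} at which Q and its three formal partial derivatives ∂Q/∂x, ∂Q/∂y, ∂Q/∂z all vanish if and only if a·b·(a+b) = 0. (Thus the discriminant of the conic bundle a x² + a xz + b y² + b yz + c z² = 0, with a, b, c linear forms on the base, consists of the three lines a = 0, b = 0 and a = b.) -/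
open MvPolynomial

/-- over a field `k` of characteristic 2, for `a, b, c ∈ k` not all zero,
the conic `Q = a·x² + a·xz + b·y² + b·yz + c·z²` (with `x = X 0`, `y = X 1`, `z = X 2`)
has a singular point (a nonzero common zero of `Q` and its three formal partial
derivatives) if and only if `a·b·(a+b) = 0`. -/
theorem discriminant_is_three_lines
    (k : Type*) [Field k] [CharP k 2] (a b c : k)
    (habc : ¬ (a = 0 ∧ b = 0 ∧ c = 0))
    (Q : MvPolynomial (Fin 3) k)
    (hQ : Q = C a * (X 0)^2 + C a * (X 0 * X 2) + C b * (X 1)^2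
        + C b * (X 1 * X 2) + C c * (X 2)^2) :
    (∃ P : Fin 3 → k, P ≠ 0 ∧ eval P Q = 0 ∧ ∀ i : Fin 3, eval P (pderiv i Q) = 0)
      ↔ a * b * (a + b) = 0 := by
  have h2 : (2:k) = 0 := CharTwo.two_eq_zero
  constructor
  · rintro ⟨P, hP, hQ0, hD⟩
    by_contra h
    have ha : a ≠ 0 := fun h' => h (by simp [h'])
    have hb : b ≠ 0 := fun h' => h (by simp [h'])
    have hab : a + b ≠ 0 := fun h' => h (by simp [h'])
    have h0 := hD 0
    have hz2 := hD 2
    simp [hQ, pderiv_mul, pderiv_pow, h2] at h0 hz2 hQ0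
    have hz : P 2 = 0 := h0.resolve_left ha
    rw [hz] at hQ0
    simp at hQ0
    have key : a * (a + b) * P 0 ^ 2 = 0 := by
      linear_combination b * hQ0 + (a * P 0 - b * P 1) * hz2
    have hx : P 0 = 0 := by
      have := mul_eq_zero.mp key
      rcases this with h' | h'
      · exact absurd h' (mul_ne_zero ha hab)
      · exact pow_eq_zero_iff (by norm_num) |>.mp h'
    have hy : P 1 = 0 := by
      have : b * P 1 = 0 := by linear_combination hz2 - a * hx
      exact (mul_eq_zero.mp this).resolve_left hb
    exact hP (funext fun i => by fin_cases i <;> assumption)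
  · intro h
    rcases mul_eq_zero.mp h with h | hab
    · rcases mul_eq_zero.mp h with ha | hb
      · refine ⟨![1,0,0], ?_, ?_, ?_⟩
        · intro h'; simpa using congrFun h' 0
        · simp [hQ, ha]
        · intro i
          fin_cases i <;> simp [hQ, pderiv_mul, pderiv_pow, h2, ha]
      · refine ⟨![0,1,0], ?_, ?_, ?_⟩
        · intro h'; simpa using congrFun h' 1
        · simp [hQ, hb]
        · intro i
          fin_cases i <;> simp [hQ, pderiv_mul, pderiv_pow, h2, hb]
    · have hba : b = a := by linear_combination hab - a * h2
      refine ⟨![1,1,0], ?_, ?_, ?_⟩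
      · intro h'; simpa using congrFun h' 0
      · simp [hQ, hba, CharTwo.add_self_eq_zero]
      · intro i
        fin_cases i <;> simp [hQ, pderiv_mul, pderiv_pow, h2, hba, CharTwo.add_self_eq_zero]
end

section
/- Let k be a field of characteristic 2, n ≥ 1 an integer, and α, β ∈ k[[u,v]] formal power series with nonzero constant term. In k[[x,y,u,v]] consider f = x² + x·y + α(u,v)·y² + β(u,v)·u·(u + vⁿ). Then under the substitution (x,y,u,v) ↦ (x·v, y·v, u·v, v), which is a well-defined substitution of formal power series, f is transformed into v²·(x² + x·y + α'(u,v)·y² + β'(u,v)·u·(u + v^{n−1})), where α'(u,v) = α(uv, v) and β'(u,v) = β(uv, v) again have nonzero constant term. (This is the blow-up chart in which the singularity x² + xy + αy² + βu(u+vⁿ) = 0 at the origin reproduces itself with n replaced by n−1.) -/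
open MvPowerSeries

/-- The substitution `(x,y,u,v) ↦ (x·v, y·v, u·v, v)` on `k[[x,y,u,v]]`
(variables `x = 0`, `y = 1`, `u = 2`, `v = 3`): the monomial `x^a y^b u^c v^d` is sent to
`x^a y^b u^c v^{a+b+c+d}`, so the coefficient of the result at the exponent `e` is the
coefficient of `f` at the exponent obtained by replacing `e 3` with
`e 3 - (e 0 + e 1 + e 2)`, provided `e 0 + e 1 + e 2 ≤ e 3`, and `0` otherwise. -/
noncomputable def blowupSubst {k : Type*} [CommRing k]
    (f : MvPowerSeries (Fin 4) k) : MvPowerSeries (Fin 4) k :=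
  fun e => if e 0 + e 1 + e 2 ≤ e 3 then
    coeff (Finsupp.update e 3 (e 3 - (e 0 + e 1 + e 2))) f else 0

/-- The inclusion `k[[u,v]] → k[[x,y,u,v]]` sending `u, v` to the variables `2, 3`. -/
noncomputable def embedUV {k : Type*} [CommRing k]
    (g : MvPowerSeries (Fin 2) k) : MvPowerSeries (Fin 4) k :=
  fun e => if e 0 = 0 ∧ e 1 = 0 then
    coeff (Finsupp.single 0 (e 2) + Finsupp.single 1 (e 3)) g else 0

/-- The substitution `(u,v) ↦ (u·v, v)` on `k[[u,v]]`: the monomial `u^i v^j` is sent to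
`u^i v^{i+j}`. -/
noncomputable def substUV {k : Type*} [CommRing k]
    (g : MvPowerSeries (Fin 2) k) : MvPowerSeries (Fin 2) k :=
  fun e => if e 0 ≤ e 1 then
    coeff (Finsupp.single 0 (e 0) + Finsupp.single 1 (e 1 - e 0)) g else 0

section Aux

open Finsupp

variable {k : Type*} [CommRing k]

lemma coeff_blowupSubst (f : MvPowerSeries (Fin 4) k) (e : Fin 4 →₀ ℕ) :
    coeff e (blowupSubst f) = if e 0 + e 1 + e 2 ≤ e 3 then
      coeff (Finsupp.update e 3 (e 3 - (e 0 + e 1 + e 2))) f else 0 := rfl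

lemma coeff_embedUV (g : MvPowerSeries (Fin 2) k) (e : Fin 4 →₀ ℕ) :
    coeff e (embedUV g) = if e 0 = 0 ∧ e 1 = 0 then
      coeff (Finsupp.single 0 (e 2) + Finsupp.single 1 (e 3)) g else 0 := rfl

lemma coeff_substUV (g : MvPowerSeries (Fin 2) k) (e : Fin 2 →₀ ℕ) :
    coeff e (substUV g) = if e 0 ≤ e 1 then
      coeff (Finsupp.single 0 (e 0) + Finsupp.single 1 (e 1 - e 0)) g else 0 := rfl

lemma le4 (a b : Fin 4 →₀ ℕ) : a ≤ b ↔ a 0 ≤ b 0 ∧ a 1 ≤ b 1 ∧ a 2 ≤ b 2 ∧ a 3 ≤ b 3 := by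
  rw [Finsupp.le_def]
  refine ⟨fun h => ⟨h 0, h 1, h 2, h 3⟩, fun ⟨h0, h1, h2, h3⟩ i => ?_⟩
  fin_cases i <;> assumption

lemma fin2_eq_zero (e : Fin 2 →₀ ℕ) : e = 0 ↔ e 0 = 0 ∧ e 1 = 0 := by
  constructor
  · rintro rfl; simp
  · rintro ⟨h0, h1⟩; ext i; fin_cases i <;> simpa

lemma pair_eq_zero (x y : ℕ) :
    (Finsupp.single (0 : Fin 2) x + Finsupp.single 1 y = 0) ↔ x = 0 ∧ y = 0 := by
  rw [fin2_eq_zero]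
  simp [Finsupp.single_apply]

set_option maxHeartbeats 2000000 in
lemma key (g : MvPowerSeries (Fin 2) k) (m : Fin 4 →₀ ℕ) :
    blowupSubst (embedUV g * monomial m 1)
      = embedUV (substUV g) * monomial (Finsupp.update m 3 (m 0 + m 1 + m 2 + m 3)) 1 := by
  ext e
  simp (config := { decide := true }) only [coeff_blowupSubst, coeff_mul_monomial,
    coeff_embedUV, coeff_substUV, mul_one,
    le4, Finsupp.coe_update, Function.update_apply, Finsupp.coe_tsub, Pi.sub_apply,
    Finsupp.add_apply, Finsupp.single_apply, if_true, if_false]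
  split_ifs <;> first
    | rfl
    | omega
    | (refine congrArg (fun d => coeff d g) ?_
       ext i
       fin_cases i <;> simp [Finsupp.single_apply] <;> omega)

lemma blowupSubst_add (f g : MvPowerSeries (Fin 4) k) :
    blowupSubst (f + g) = blowupSubst f + blowupSubst g := by
  ext e
  simp only [map_add, coeff_blowupSubst]
  split_ifs <;> simp

lemma embedUV_one : embedUV (1 : MvPowerSeries (Fin 2) k) = 1 := by
  ext e
  rw [coeff_embedUV]
  have h4 : (e = 0) ↔ e 0 = 0 ∧ e 1 = 0 ∧ e 2 = 0 ∧ e 3 = 0 := by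
    constructor
    · rintro rfl; simp
    · rintro ⟨h0, h1, h2, h3⟩; ext i; fin_cases i <;> simpa
  simp only [coeff_one, pair_eq_zero, h4]
  split_ifs <;> first | rfl | omega

lemma substUV_one : substUV (1 : MvPowerSeries (Fin 2) k) = 1 := by
  ext e
  rw [coeff_substUV]
  simp (config := { decide := true }) only [coeff_one, fin2_eq_zero,
    Finsupp.add_apply, Finsupp.single_apply, if_true, if_false]
  split_ifs <;> first | rfl | omega

lemma constantCoeff_substUV (g : MvPowerSeries (Fin 2) k) :
    constantCoeff (substUV g) = constantCoeff g := by
  rw [← coeff_zero_eq_constantCoeff, coeff_substUV]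
  simp

lemma mono_eq (D A B : Fin 4 →₀ ℕ) (h : D = A + B) (E : MvPowerSeries (Fin 4) k) :
    E * monomial D 1 = monomial A 1 * (E * monomial B 1) := by
  rw [h, ← mul_one (1 : k), ← monomial_mul_monomial]
  ring

lemma k1 : blowupSubst ((X 0 : MvPowerSeries (Fin 4) k) ^ 2) = X 3 ^ 2 * X 0 ^ 2 := by
  have h : ((X 0 : MvPowerSeries (Fin 4) k) ^ 2)
      = embedUV 1 * monomial (Finsupp.single 0 2) 1 := by
    rw [embedUV_one, one_mul, X_pow_eq]
  rw [h, key, substUV_one, embedUV_one,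
    mono_eq _ (Finsupp.single 3 2) (Finsupp.single 0 2)
      (by ext i; fin_cases i <;>
        simp [Finsupp.coe_update, Function.update_apply, Finsupp.single_apply]),
    ← X_pow_eq, ← X_pow_eq]

lemma k2 : blowupSubst ((X 0 : MvPowerSeries (Fin 4) k) * X 1) = X 3 ^ 2 * (X 0 * X 1) := by
  have h : ((X 0 : MvPowerSeries (Fin 4) k) * X 1)
      = embedUV 1 * monomial (Finsupp.single 0 1 + Finsupp.single 1 1) 1 := by
    rw [embedUV_one, one_mul, X_def, X_def, monomial_mul_monomial, mul_one]
  rw [h, key, substUV_one,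
    mono_eq _ (Finsupp.single 3 2) (Finsupp.single 0 1 + Finsupp.single 1 1)
      (by ext i; fin_cases i <;>
        simp [Finsupp.coe_update, Function.update_apply, Finsupp.single_apply]),
    embedUV_one, ← X_pow_eq]

lemma k3 (g : MvPowerSeries (Fin 2) k) :
    blowupSubst (embedUV g * (X 1 : MvPowerSeries (Fin 4) k) ^ 2)
      = X 3 ^ 2 * (embedUV (substUV g) * X 1 ^ 2) := by
  rw [X_pow_eq, key,
    mono_eq _ (Finsupp.single 3 2) (Finsupp.single 1 2)
      (by ext i; fin_cases i <;>
        simp [Finsupp.coe_update, Function.update_apply, Finsupp.single_apply]),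
    ← X_pow_eq, ← X_pow_eq]

lemma k4 (g : MvPowerSeries (Fin 2) k) :
    blowupSubst (embedUV g * ((X 2 : MvPowerSeries (Fin 4) k) * X 2))
      = X 3 ^ 2 * (embedUV (substUV g) * (X 2 * X 2)) := by
  have h : ((X 2 : MvPowerSeries (Fin 4) k) * X 2)
      = monomial (Finsupp.single 2 2) 1 := by
    rw [← pow_two, X_pow_eq]
  rw [h, key,
    mono_eq _ (Finsupp.single 3 2) (Finsupp.single 2 2)
      (by ext i; fin_cases i <;>
        simp [Finsupp.coe_update, Function.update_apply, Finsupp.single_apply]),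
    ← X_pow_eq]

lemma k5 (g : MvPowerSeries (Fin 2) k) (n : ℕ) (hn : 1 ≤ n) :
    blowupSubst (embedUV g * ((X 2 : MvPowerSeries (Fin 4) k) * X 3 ^ n))
      = X 3 ^ 2 * (embedUV (substUV g) * (X 2 * X 3 ^ (n - 1))) := by
  have h : ∀ j : ℕ, ((X 2 : MvPowerSeries (Fin 4) k) * X 3 ^ j)
      = monomial (Finsupp.single 2 1 + Finsupp.single 3 j) 1 := by
    intro j
    rw [X_def, X_pow_eq, monomial_mul_monomial, mul_one]
  rw [h n, key, h (n - 1),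
    mono_eq _ (Finsupp.single 3 2) (Finsupp.single 2 1 + Finsupp.single 3 (n - 1))
      (by ext i; fin_cases i <;>
        simp [Finsupp.coe_update, Function.update_apply, Finsupp.single_apply] <;> omega),
    ← X_pow_eq]

end Aux

/-- for `f = x² + xy + α(u,v)·y² + β(u,v)·u·(u+vⁿ)` with `α, β` units of
`k[[u,v]]` and `char k = 2`, the substitution `(x,y,u,v) ↦ (xv, yv, uv, v)` transforms `f`
into `v²·(x² + xy + α(uv,v)·y² + β(uv,v)·u·(u+v^{n-1}))`, where `α(uv,v)` and `β(uv,v)`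
again have nonzero constant term. -/
theorem blowup_chart_self_similar
    (k : Type*) [Field k] [CharP k 2] (n : ℕ) (hn : 1 ≤ n)
    (α β : MvPowerSeries (Fin 2) k)
    (hα : constantCoeff α ≠ 0)
    (hβ : constantCoeff β ≠ 0)
    (f : MvPowerSeries (Fin 4) k)
    (hf : f = (X 0)^2 + X 0 * X 1 + embedUV α * (X 1)^2
        + embedUV β * (X 2 * (X 2 + (X 3)^n))) :
    blowupSubst f = (X 3)^2 * ((X 0)^2 + X 0 * X 1 + embedUV (substUV α) * (X 1)^2
        + embedUV (substUV β) * (X 2 * (X 2 + (X 3)^(n-1)))) ∧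
    constantCoeff (substUV α) ≠ 0 ∧
    constantCoeff (substUV β) ≠ 0 := by
  refine ⟨?_, by rwa [constantCoeff_substUV], by rwa [constantCoeff_substUV]⟩
  have hsplit : embedUV β * ((X 2 : MvPowerSeries (Fin 4) k) * (X 2 + X 3 ^ n))
      = embedUV β * (X 2 * X 2) + embedUV β * (X 2 * X 3 ^ n) := by
    rw [mul_add, mul_add]
  rw [hf, hsplit, blowupSubst_add, blowupSubst_add, blowupSubst_add, blowupSubst_add,
    k1, k2, k3, k4, k5 β n hn]
  ring
end
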